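/- arXiv:1512.01584 — 5 statements merged into one kernel-verified Lean document; each statement's English description precedes it below -/
import Mathlib

section
/- Let A be an n-by-n nonsingular Hermitian matrix and let (λ, x) be an eigenpair of A (so Ax = λx with x ≠ 0). Then for any nonzero vector y in ℂ^n, |λ/λ_max| · sin∠(x, Ay) ≤ sin∠(x, y) ≤ |λ/λ_min| · sin∠(x, Ay), where λ_min and λ_max are the smallest and largest magnitude eigenvalues of A, respectively. -/
open Matrix

noncomputable def hnorm {n : ℕ} (x : Fin n → ℂ) : ℝ :=
  Real.sqrt ((star x ⬝ᵥ x).re)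

noncomputable def cosAngle {n : ℕ} (x y : Fin n → ℂ) : ℝ :=
  ‖star x ⬝ᵥ y‖ / (hnorm x * hnorm y)

noncomputable def sinAngle {n : ℕ} (x y : Fin n → ℂ) : ℝ :=
  Real.sqrt (1 - cosAngle x y ^ 2)

noncomputable def sinAngleSub {n : ℕ} (x : Fin n → ℂ) (K : Submodule ℂ (Fin n → ℂ)) : ℝ :=
  sInf {s : ℝ | ∃ y ∈ K, y ≠ 0 ∧ s = sinAngle x y}

noncomputable def sinAngleSubSub {n : ℕ} (X K : Submodule ℂ (Fin n → ℂ)) : ℝ :=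
  sInf {s : ℝ | ∃ x ∈ X, x ≠ 0 ∧ ∃ y ∈ K, y ≠ 0 ∧ s = sinAngle x y}

def Eigenpair {n : ℕ} (A : Matrix (Fin n) (Fin n) ℂ) (μ : ℂ) (v : Fin n → ℂ) : Prop :=
  v ≠ 0 ∧ A *ᵥ v = μ • v

noncomputable def specNorm {n : ℕ} (M : Matrix (Fin n) (Fin n) ℂ) : ℝ :=
  sSup {r : ℝ | ∃ v : Fin n → ℂ, hnorm v = 1 ∧ r = hnorm (M *ᵥ v)}

noncomputable def frobNorm {m p : ℕ} (M : Matrix (Fin m) (Fin p) ℂ) : ℝ :=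
  Real.sqrt (∑ i, ∑ j, ‖M i j‖ ^ 2)

noncomputable def specCond {n : ℕ} (M : Matrix (Fin n) (Fin n) ℂ) : ℝ :=
  sSup {r : ℝ | ∃ μ ∈ spectrum ℂ M, r = ‖μ‖} /
    sInf {r : ℝ | ∃ μ ∈ spectrum ℂ M, r = ‖μ‖}

def RitzPair {n : ℕ} (A : Matrix (Fin n) (Fin n) ℂ) (K : Submodule ℂ (Fin n → ℂ))
    (μ : ℂ) (u : Fin n → ℂ) : Prop :=
  u ∈ K ∧ u ≠ 0 ∧ ∀ y ∈ K, star y ⬝ᵥ (A *ᵥ u - μ • u) = 0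

def HarmonicRitzPair {n : ℕ} (A : Matrix (Fin n) (Fin n) ℂ) (σ : ℂ)
    (K : Submodule ℂ (Fin n → ℂ)) (θ : ℂ) (v : Fin n → ℂ) : Prop :=
  v ∈ K ∧ v ≠ 0 ∧ ∀ y ∈ K, star ((A - σ • 1) *ᵥ y) ⬝ᵥ (A *ᵥ v - θ • v) = 0

def THarmonicRitzPair {n : ℕ} (A T : Matrix (Fin n) (Fin n) ℂ) (σ : ℂ)
    (K : Submodule ℂ (Fin n → ℂ)) (θ : ℂ) (v : Fin n → ℂ) : Prop :=
  v ∈ K ∧ v ≠ 0 ∧ ∀ y ∈ K, star ((A - σ • 1) *ᵥ y) ⬝ᵥ (T *ᵥ (A *ᵥ v - θ • v)) = 0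

def IsOrthProjOn {n : ℕ} (P : Matrix (Fin n) (Fin n) ℂ)
    (Q : Submodule ℂ (Fin n → ℂ)) : Prop :=
  P.IsHermitian ∧ P * P = P ∧ (∀ v, P *ᵥ v ∈ Q) ∧ (∀ v ∈ Q, P *ᵥ v = v)

section Helpers

variable {n : ℕ}

noncomputable abbrev eu (x : Fin n → ℂ) : EuclideanSpace ℂ (Fin n) :=
  WithLp.toLp 2 x

lemma dot_eq_inner (x y : Fin n → ℂ) : star x ⬝ᵥ y = inner (𝕜 := ℂ) (eu x) (eu y) := by
  rw [EuclideanSpace.inner_eq_star_dotProduct, dotProduct_comm]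

lemma hnorm_eq (x : Fin n → ℂ) : hnorm x = ‖eu x‖ := by
  rw [hnorm, dot_eq_inner]
  have h : (inner (𝕜 := ℂ) (eu x) (eu x)).re = ‖eu x‖ ^ 2 := by
    rw [inner_self_eq_norm_sq_to_K]
    norm_cast
  rw [h]
  exact Real.sqrt_sq (norm_nonneg _)

lemma repr_toEuclideanLin (A : Matrix (Fin n) (Fin n) ℂ) (hA : A.IsHermitian)
    (w : EuclideanSpace ℂ (Fin n)) (i : Fin n) :
    (hA.eigenvectorBasis.repr (Matrix.toEuclideanLin A w)) i
      = (hA.eigenvalues i : ℂ) * hA.eigenvectorBasis.repr w i := by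
  rw [OrthonormalBasis.repr_apply_apply, OrthonormalBasis.repr_apply_apply]
  have hsym := (Matrix.isHermitian_iff_isSymmetric).1 hA
  rw [← hsym (hA.eigenvectorBasis i) w]
  have : Matrix.toEuclideanLin A (hA.eigenvectorBasis i)
      = (hA.eigenvalues i : ℂ) • hA.eigenvectorBasis i := by
    apply (WithLp.equiv 2 (Fin n → ℂ)).injective
    simpa [Matrix.toEuclideanLin_apply] using hA.mulVec_eigenvectorBasis i
  rw [this, inner_smul_left]
  simp

lemma norm_sq_eq_sum (v : EuclideanSpace ℂ (Fin n)) : ‖v‖ ^ 2 = ∑ i, ‖v i‖ ^ 2 := by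
  rw [EuclideanSpace.norm_eq, Real.sq_sqrt]
  positivity

lemma norm_toEuclideanLin_sq (A : Matrix (Fin n) (Fin n) ℂ) (hA : A.IsHermitian)
    (w : EuclideanSpace ℂ (Fin n)) :
    ‖Matrix.toEuclideanLin A w‖ ^ 2
      = ∑ i, (hA.eigenvalues i) ^ 2 * ‖hA.eigenvectorBasis.repr w i‖ ^ 2 := by
  rw [← (hA.eigenvectorBasis.repr.norm_map (Matrix.toEuclideanLin A w)), norm_sq_eq_sum]
  refine Finset.sum_congr rfl fun i _ => ?_
  rw [repr_toEuclideanLin A hA w i]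
  rw [norm_mul]
  simp [mul_pow, sq_abs]

lemma spec_bounds (A : Matrix (Fin n) (Fin n) ℂ) (hA : A.IsHermitian)
    {m M : ℝ} (hm0 : 0 ≤ m)
    (hm : ∀ i, m ≤ |hA.eigenvalues i|) (hM : ∀ i, |hA.eigenvalues i| ≤ M)
    (w : EuclideanSpace ℂ (Fin n)) :
    m ^ 2 * ‖w‖ ^ 2 ≤ ‖Matrix.toEuclideanLin A w‖ ^ 2 ∧
      ‖Matrix.toEuclideanLin A w‖ ^ 2 ≤ M ^ 2 * ‖w‖ ^ 2 := by
  have hw : ‖w‖ ^ 2 = ∑ i, ‖hA.eigenvectorBasis.repr w i‖ ^ 2 := by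
    rw [← (hA.eigenvectorBasis.repr.norm_map w), norm_sq_eq_sum]
  rw [norm_toEuclideanLin_sq A hA, hw]
  rw [Finset.mul_sum, Finset.mul_sum]
  constructor <;> refine Finset.sum_le_sum fun i _ => ?_ <;>
    rw [(sq_abs (hA.eigenvalues i)).symm]
  · exact mul_le_mul_of_nonneg_right (pow_le_pow_left₀ hm0 (hm i) 2) (by positivity)
  · exact mul_le_mul_of_nonneg_right (pow_le_pow_left₀ (abs_nonneg _) (hM i) 2) (by positivity)

lemma one_sub_cos_sq (x y : Fin n → ℂ) (hx : eu x ≠ 0) (hy : eu y ≠ 0) :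
    1 - cosAngle x y ^ 2
      = ‖eu y - ((inner ℂ (eu x) (eu y) : ℂ) / ((‖eu x‖ : ℂ) ^ 2)) • eu x‖ ^ 2 / ‖eu y‖ ^ 2 := by
  set X := eu x with hXdef
  set Y := eu y with hYdef
  set c : ℂ := (inner ℂ X Y : ℂ) / ((‖X‖ : ℂ) ^ 2) with hc
  have hXn : ‖X‖ ≠ 0 := norm_ne_zero_iff.2 hx
  have hYn : ‖Y‖ ≠ 0 := norm_ne_zero_iff.2 hy
  have hXnC : ((‖X‖ : ℂ)) ≠ 0 := by exact_mod_cast hXn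
  have hX2 : (inner ℂ X X : ℂ) = (‖X‖ : ℂ) ^ 2 := by
    exact_mod_cast inner_self_eq_norm_sq_to_K (𝕜 := ℂ) X
  have hinner : (inner ℂ X Y : ℂ) = c * (‖X‖ : ℂ) ^ 2 := by
    rw [hc]; field_simp
  have horth : (inner ℂ X (Y - c • X) : ℂ) = 0 := by
    rw [inner_sub_right, inner_smul_right, hX2, hinner]; ring
  have horth2 : (inner ℂ (c • X) (Y - c • X) : ℂ) = 0 := by
    rw [inner_smul_left, horth, mul_zero]
  have hpyth : ‖Y‖ ^ 2 = ‖c • X‖ ^ 2 + ‖Y - c • X‖ ^ 2 := by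
    have h := norm_add_sq_eq_norm_sq_add_norm_sq_of_inner_eq_zero (c • X) (Y - c • X) horth2
    rw [add_sub_cancel] at h
    simpa [pow_two] using h
  have hcos : cosAngle x y = ‖c‖ * ‖X‖ / ‖Y‖ := by
    rw [cosAngle, hnorm_eq, hnorm_eq, ← hXdef, ← hYdef,
      dot_eq_inner, ← hXdef, ← hYdef, hinner]
    rw [norm_mul]
    have : ‖((‖X‖ : ℂ) ^ 2)‖ = ‖X‖ ^ 2 := by
      rw [norm_pow, Complex.norm_real, Real.norm_of_nonneg (norm_nonneg _)]
    rw [this]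
    field_simp
  rw [hcos]
  have hsmul : ‖c • X‖ ^ 2 = ‖c‖ ^ 2 * ‖X‖ ^ 2 := by rw [norm_smul, mul_pow]
  have habs : ‖c‖ = ‖c‖ := rfl
  rw [div_pow, mul_pow]
  have hsmul' : ‖c • X‖ ^ 2 = ‖c‖ ^ 2 * ‖X‖ ^ 2 := by exact hsmul
  field_simp
  nlinarith [hpyth, hsmul, hsmul']

lemma eu_ne_zero {x : Fin n → ℂ} (hx : x ≠ 0) : eu x ≠ 0 := by
  intro h
  apply hx
  have := congrArg (WithLp.equiv 2 (Fin n → ℂ)) h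
  simpa using this

lemma mulVec_ne_zero (A : Matrix (Fin n) (Fin n) ℂ) (hdet : IsUnit A.det)
    {v : Fin n → ℂ} (hv : v ≠ 0) : A *ᵥ v ≠ 0 := by
  intro h
  apply hv
  have hinv : Invertible A := A.invertibleOfIsUnitDet hdet
  have := congrArg (fun w => A⁻¹ *ᵥ w) h
  simpa [Matrix.mulVec_mulVec, Matrix.nonsing_inv_mul A hdet] using this

end Helpers

/-- Lemma 2.1 (two-sided sine bound for a Hermitian nonsingular matrix). -/
theorem stmt0_sin_two_sided_bound
    {n : ℕ} (A : Matrix (Fin n) (Fin n) ℂ) (hA : A.IsHermitian) (hdet : IsUnit A.det)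
    (l : ℂ) (x : Fin n → ℂ) (hx : Eigenpair A l x)
    (lmin lmax : ℂ) (xmin xmax : Fin n → ℂ)
    (hmin : Eigenpair A lmin xmin) (hmax : Eigenpair A lmax xmax)
    (hminLe : ∀ μ v, Eigenpair A μ v → ‖lmin‖ ≤ ‖μ‖)
    (hmaxGe : ∀ μ v, Eigenpair A μ v → ‖μ‖ ≤ ‖lmax‖)
    (y : Fin n → ℂ) (hy : y ≠ 0) :
    ‖l / lmax‖ * sinAngle x (A *ᵥ y) ≤ sinAngle x y ∧
      sinAngle x y ≤ ‖l / lmin‖ * sinAngle x (A *ᵥ y) := by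
  have hx0 := hx.1
  have hX0 : eu x ≠ 0 := eu_ne_zero hx0
  have hY0 : eu y ≠ 0 := eu_ne_zero hy
  have hAy0 : A *ᵥ y ≠ 0 := mulVec_ne_zero A hdet hy
  have hAY0 : eu (A *ᵥ y) ≠ 0 := eu_ne_zero hAy0
  set T : EuclideanSpace ℂ (Fin n) →ₗ[ℂ] EuclideanSpace ℂ (Fin n) := Matrix.toEuclideanLin A with hT
  have hsym := (Matrix.isHermitian_iff_isSymmetric).1 hA
  set X : EuclideanSpace ℂ (Fin n) := eu x with hXdef
  set Y : EuclideanSpace ℂ (Fin n) := eu y with hYdef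
  have hTX : T X = l • X := by
    rw [hT, hXdef, Matrix.toEuclideanLin_apply_piLp_toLp, hx.2]
    simp
  have hAyT : eu (A *ᵥ y) = T Y := by
    rw [hT, hYdef, Matrix.toEuclideanLin_apply_piLp_toLp]
  -- eigenvalue of Hermitian matrix is real
  have hXX : (inner ℂ X X : ℂ) ≠ 0 := by
    rw [inner_self_ne_zero]; exact hX0
  have hlreal : (starRingEnd ℂ) l = l := by
    have h := hsym X X
    rw [hTX, inner_smul_left, inner_smul_right] at h
    exact mul_right_cancel₀ hXX h
  -- nonzero eigenvalues
  have hl0 : l ≠ 0 := by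
    intro h
    apply mulVec_ne_zero A hdet hx0
    rw [hx.2, h, zero_smul]
  have hlmin0 : lmin ≠ 0 := by
    intro h
    apply mulVec_ne_zero A hdet hmin.1
    rw [hmin.2, h, zero_smul]
  have hlmax0 : lmax ≠ 0 := by
    intro h
    apply mulVec_ne_zero A hdet hmax.1
    rw [hmax.2, h, zero_smul]
  -- decomposition
  set c : ℂ := (inner ℂ X Y : ℂ) / ((‖X‖ : ℂ) ^ 2) with hc
  set z : EuclideanSpace ℂ (Fin n) := Y - c • X with hz
  have hXn : ‖X‖ ≠ 0 := norm_ne_zero_iff.2 hX0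
  have hXnC : ((‖X‖ : ℂ)) ≠ 0 := by exact_mod_cast hXn
  have hX2 : (inner ℂ X X : ℂ) = (‖X‖ : ℂ) ^ 2 := by
    exact_mod_cast inner_self_eq_norm_sq_to_K (𝕜 := ℂ) X
  have hinner : (inner ℂ X Y : ℂ) = c * (‖X‖ : ℂ) ^ 2 := by
    rw [hc]; field_simp
  have horth : (inner ℂ X z : ℂ) = 0 := by
    rw [hz, inner_sub_right, inner_smul_right, hX2, hinner]; ring
  have horthTz : (inner ℂ X (T z) : ℂ) = 0 := by
    rw [← hsym X z, hTX, inner_smul_left, horth, mul_zero]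
  -- inner X (T Y)
  have hinnerTY : (inner ℂ X (T Y) : ℂ) = l * (inner ℂ X Y : ℂ) := by
    rw [← hsym X Y, hTX, inner_smul_left, hlreal]
  -- T Y decomposition
  have hTz : T Y - (l * c) • X = T z := by
    rw [hz, map_sub, LinearMap.map_smul, hTX, smul_smul, mul_comm c l]
  -- sine formulas
  have h1 := one_sub_cos_sq x y hX0 hY0
  have h2 := one_sub_cos_sq x (A *ᵥ y) hX0 hAY0
  rw [hAyT] at h2
  rw [← hXdef, ← hYdef, ← hc, ← hz] at h1
  have hcoef : (inner ℂ X (T Y) : ℂ) / ((‖X‖ : ℂ) ^ 2) = l * c := by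
    rw [hinnerTY, hinner]; field_simp
  rw [← hXdef, hcoef, hTz] at h2
  -- Pythagoras
  have hY2 : ‖Y‖ ^ 2 = ‖c‖ ^ 2 * ‖X‖ ^ 2 + ‖z‖ ^ 2 := by
    have horth2 : (inner ℂ (c • X) z : ℂ) = 0 := by
      rw [inner_smul_left, horth, mul_zero]
    have h := norm_add_sq_eq_norm_sq_add_norm_sq_of_inner_eq_zero (c • X) z horth2
    have hY' : c • X + z = Y := by rw [hz]; abel
    rw [hY'] at h
    have h' : ‖Y‖ ^ 2 = ‖c • X‖ ^ 2 + ‖z‖ ^ 2 := by simpa [pow_two] using h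
    rw [h', norm_smul, mul_pow]
  have hTY2 : ‖T Y‖ ^ 2 = ‖l‖ ^ 2 * (‖c‖ ^ 2 * ‖X‖ ^ 2) + ‖T z‖ ^ 2 := by
    have horth2 : (inner ℂ ((l * c) • X) (T z) : ℂ) = 0 := by
      rw [inner_smul_left, horthTz, mul_zero]
    have h := norm_add_sq_eq_norm_sq_add_norm_sq_of_inner_eq_zero ((l * c) • X) (T z) horth2
    have hY' : (l * c) • X + T z = T Y := by rw [← hTz]; abel
    rw [hY'] at h
    have h' : ‖T Y‖ ^ 2 = ‖(l * c) • X‖ ^ 2 + ‖T z‖ ^ 2 := by simpa [pow_two] using h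
    rw [h', norm_smul, norm_mul, mul_pow, mul_pow]
    ring
  -- spectral bounds on z
  have hspec := spec_bounds A hA (norm_nonneg lmin)
    (fun i => by
      have hep : Eigenpair A ((hA.eigenvalues i : ℝ) : ℂ)
          (WithLp.equiv 2 (Fin n → ℂ) (hA.eigenvectorBasis i)) := by
        constructor
        · intro h0
          have h1 : hA.eigenvectorBasis i = 0 := by
            apply (WithLp.equiv 2 (Fin n → ℂ)).injective
            simpa using h0
          have := hA.eigenvectorBasis.orthonormal.1 i
          rw [h1] at this
          simp at this
        · exact hA.mulVec_eigenvectorBasis i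
      simpa using hminLe _ _ hep)
    (fun i => by
      have hep : Eigenpair A ((hA.eigenvalues i : ℝ) : ℂ)
          (WithLp.equiv 2 (Fin n → ℂ) (hA.eigenvectorBasis i)) := by
        constructor
        · intro h0
          have h1 : hA.eigenvectorBasis i = 0 := by
            apply (WithLp.equiv 2 (Fin n → ℂ)).injective
            simpa using h0
          have := hA.eigenvectorBasis.orthonormal.1 i
          rw [h1] at this
          simp at this
        · exact hA.mulVec_eigenvectorBasis i
      simpa using hmaxGe _ _ hep)
    z
  -- real abbreviations
  set al := ‖l‖ with hal
  set am := ‖lmin‖ with ham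
  set aM := ‖lmax‖ with haM
  set a := ‖c‖ ^ 2 * ‖X‖ ^ 2 with hadef
  set s := ‖z‖ ^ 2 with hsdef
  set S := ‖T z‖ ^ 2 with hSdef
  have hnl : ‖l‖ = al := rfl
  have hS1 : am ^ 2 * s ≤ S := hspec.1
  have hS2 : S ≤ aM ^ 2 * s := hspec.2
  have hml : am ≤ al := hminLe l x hx
  have hMl : al ≤ aM := hmaxGe l x hx
  have ham0 : 0 < am := by
    rw [ham]; exact norm_pos_iff.2 hlmin0
  have hal0 : 0 < al := lt_of_lt_of_le ham0 hml
  have haM0 : 0 < aM := lt_of_lt_of_le hal0 hMl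
  have ha0 : 0 ≤ a := by positivity
  have hs0 : 0 ≤ s := by positivity
  have hS0 : 0 ≤ S := by positivity
  have hYpos : 0 < a + s := by
    rw [← hY2]
    have : ‖Y‖ ≠ 0 := norm_ne_zero_iff.2 hY0
    positivity
  have hTY0 : T Y ≠ 0 := by rw [← hAyT]; exact hAY0
  have hTYpos : 0 < al ^ 2 * a + S := by
    rw [← hnl, ← hTY2]
    exact pow_pos (norm_pos_iff.2 hTY0) 2
  -- sine values
  have hsin1 : sinAngle x y = Real.sqrt (s / (a + s)) := by
    rw [sinAngle, h1, hY2]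
  have hsin2 : sinAngle x (A *ᵥ y) = Real.sqrt (S / (al ^ 2 * a + S)) := by
    rw [sinAngle, h2, hTY2]
  rw [hsin1, hsin2]
  -- final arithmetic
  have habs1 : ‖l / lmax‖ = Real.sqrt (al ^ 2 / aM ^ 2) := by
    rw [norm_div, ← hal, ← haM, Real.sqrt_div (sq_nonneg al), Real.sqrt_sq hal0.le,
      Real.sqrt_sq haM0.le]
  have habs2 : ‖l / lmin‖ = Real.sqrt (al ^ 2 / am ^ 2) := by
    rw [norm_div, ← hal, ← ham, Real.sqrt_div (sq_nonneg al), Real.sqrt_sq hal0.le,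
      Real.sqrt_sq ham0.le]
  rw [habs1, habs2, ← Real.sqrt_mul (by positivity), ← Real.sqrt_mul (by positivity)]
  clear_value a s S al am aM
  clear hsin1 hsin2 habs1 habs2 h1 h2 hY2 hTY2 hspec hnl hTz hcoef hinnerTY horth horthTz
    hinner hX2 hXnC hXn hz hc hTX hAyT hXX hlreal hTY0 hsdef hSdef hadef hal ham haM
  constructor
  · apply Real.sqrt_le_sqrt
    rw [div_mul_div_comm, div_le_div_iff₀ (mul_pos (pow_pos haM0 2) hTYpos) hYpos]
    have p1 : al ^ 2 * a * S ≤ al ^ 2 * a * (aM ^ 2 * s) :=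
      mul_le_mul_of_nonneg_left hS2 (mul_nonneg (sq_nonneg al) ha0)
    have p2 : al ^ 2 * (s * S) ≤ aM ^ 2 * (s * S) :=
      mul_le_mul_of_nonneg_right (pow_le_pow_left₀ hal0.le hMl 2) (mul_nonneg hs0 hS0)
    linarith
  · apply Real.sqrt_le_sqrt
    rw [div_mul_div_comm, div_le_div_iff₀ hYpos (mul_pos (pow_pos ham0 2) hTYpos)]
    have p1 : al ^ 2 * a * (am ^ 2 * s) ≤ al ^ 2 * a * S :=
      mul_le_mul_of_nonneg_left hS1 (mul_nonneg (sq_nonneg al) ha0)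
    have p2 : am ^ 2 * (s * S) ≤ al ^ 2 * (s * S) :=
      mul_le_mul_of_nonneg_right (pow_le_pow_left₀ ham0.le hml 2) (mul_nonneg hs0 hS0)
    linarith
end

section
/- Let A be an n-by-n Hermitian matrix with eigenpair (λ, x) where λ is an eigenvalue of largest absolute value among all eigenvalues of A (λ = λ_max), and assume A is nonsingular. Then for every nonzero vector y in ℂ^n, sin∠(x, Ay) ≤ sin∠(x, y); that is, one step of the power method applied to y does not worsen the angle to the dominant eigenvector. -/
open Matrix
open scoped ComplexOrder

lemma hnorm_eq_norm {n : ℕ} (v : Fin n → ℂ) :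
    hnorm v = ‖(WithLp.equiv 2 (Fin n → ℂ)).symm v‖ := by
  rw [hnorm, @norm_eq_sqrt_re_inner ℂ, WithLp.equiv_symm_apply, EuclideanSpace.inner_toLp_toLp, dotProduct_comm]
  rfl

lemma hnorm_pos {n : ℕ} {v : Fin n → ℂ} (hv : v ≠ 0) : 0 < hnorm v := by
  rw [hnorm_eq_norm]
  simpa using hv

lemma mulVec_hnorm_le {n : ℕ} (A : Matrix (Fin n) (Fin n) ℂ) (hA : A.IsHermitian)
    (l : ℂ)
    (hmax : ∀ μ v, Eigenpair A μ v → ‖μ‖ ≤ ‖l‖)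
    (v : Fin n → ℂ) :
    hnorm (A *ᵥ v) ≤ ‖l‖ * hnorm v := by
  classical
  set b := hA.eigenvectorBasis with hb
  set w : EuclideanSpace ℂ (Fin n) := (WithLp.equiv 2 (Fin n → ℂ)).symm v with hw
  set Aw : EuclideanSpace ℂ (Fin n) := (WithLp.equiv 2 (Fin n → ℂ)).symm (A *ᵥ v) with hAw
  have hbnz : ∀ i, ⇑(b i) ≠ (0 : Fin n → ℂ) := by
    intro i h
    have := b.orthonormal.1 i
    rw [show (b i : EuclideanSpace ℂ (Fin n)) = 0 from (WithLp.ofLp_eq_zero 2).1 h] at this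
    simp at this
  have heig : ∀ i, ‖((hA.eigenvalues i : ℝ) : ℂ)‖ ≤ ‖l‖ := by
    intro i
    refine hmax _ (⇑(b i)) ⟨hbnz i, ?_⟩
    rw [hA.mulVec_eigenvectorBasis i]
    funext j
    simp [Complex.real_smul, hb]
  have key : ∀ i, b.repr Aw i = ((hA.eigenvalues i : ℝ) : ℂ) * b.repr w i := by
    intro i
    rw [b.repr_apply_apply, b.repr_apply_apply]
    show (A *ᵥ v) ⬝ᵥ star (⇑(b i)) = _ * (v ⬝ᵥ star (⇑(b i)))
    rw [dotProduct_comm, dotProduct_comm v]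
    show star (⇑(b i)) ⬝ᵥ (A *ᵥ v) = _ * (star (⇑(b i)) ⬝ᵥ v)
    rw [Matrix.dotProduct_mulVec]
    have h1 : star (⇑(b i)) ᵥ* A = star (A *ᵥ ⇑(b i)) := by
      rw [Matrix.star_mulVec, hA.eq]
    rw [h1, hA.mulVec_eigenvectorBasis i]
    have h2 : star ((hA.eigenvalues i : ℝ) • ⇑(b i)) = (hA.eigenvalues i : ℝ) • star (⇑(b i)) := by
      funext j; simp [Complex.real_smul]
    rw [h2, smul_dotProduct]
    simp [Complex.real_smul]
  have h1 : hnorm (A *ᵥ v) = ‖b.repr Aw‖ := by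
    rw [hnorm_eq_norm, ← b.repr.norm_map]
  have h2 : hnorm v = ‖b.repr w‖ := by
    rw [hnorm_eq_norm, ← b.repr.norm_map]
  rw [h1, h2, EuclideanSpace.norm_eq, EuclideanSpace.norm_eq]
  rw [← Real.sqrt_sq (norm_nonneg l), ← Real.sqrt_mul (sq_nonneg _)]
  apply Real.sqrt_le_sqrt
  rw [Finset.mul_sum]
  apply Finset.sum_le_sum
  intro i _
  rw [key i, norm_mul, mul_pow]
  have h3 : ‖((hA.eigenvalues i : ℝ) : ℂ)‖ ^ 2 ≤ ‖l‖ ^ 2 :=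
    pow_le_pow_left₀ (norm_nonneg _) (heig i) 2
  exact mul_le_mul_of_nonneg_right h3 (sq_nonneg _)

/-- for the largest-magnitude eigenvalue, one step of the power method does
not worsen the angle: sin∠(x, Ay) ≤ sin∠(x, y). -/
theorem stmt12_power_method_improves
    {n : ℕ} (A : Matrix (Fin n) (Fin n) ℂ) (hA : A.IsHermitian) (hdet : IsUnit A.det)
    (l : ℂ) (x : Fin n → ℂ) (hx : Eigenpair A l x)
    (hmax : ∀ μ v, Eigenpair A μ v → ‖μ‖ ≤ ‖l‖)
    (y : Fin n → ℂ) (hy : y ≠ 0) :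
    sinAngle x (A *ᵥ y) ≤ sinAngle x y := by
  obtain ⟨hxne, hxeig⟩ := hx
  have hAunit : IsUnit A := (Matrix.isUnit_iff_isUnit_det A).2 hdet
  have hinj : Function.Injective (A.mulVec) := Matrix.mulVec_injective_iff_isUnit.2 hAunit
  have hAy : A *ᵥ y ≠ 0 := by
    intro h
    exact hy (hinj (h.trans (Matrix.mulVec_zero A).symm))
  have hl : ‖l‖ ≠ 0 := by
    simp only [ne_eq, norm_eq_zero]
    intro h
    apply hxne
    apply hinj
    rw [hxeig, h, Matrix.mulVec_zero, zero_smul]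
  have hnum : ‖star x ⬝ᵥ (A *ᵥ y)‖ = ‖l‖ * ‖star x ⬝ᵥ y‖ := by
    rw [Matrix.dotProduct_mulVec]
    have h1 : star x ᵥ* A = star (A *ᵥ x) := by rw [Matrix.star_mulVec, hA.eq]
    rw [h1, hxeig, star_smul, smul_dotProduct]
    simp
  have hbound := mulVec_hnorm_le A hA l hmax y
  have hnx := hnorm_pos hxne
  have hny := hnorm_pos hy
  have hnAy := hnorm_pos hAy
  have hcos : cosAngle x y ≤ cosAngle x (A *ᵥ y) := by
    unfold cosAngle
    rw [hnum, div_le_div_iff₀ (by positivity) (by positivity)]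
    have h3 : (‖star x ⬝ᵥ y‖ * hnorm x) * hnorm (A *ᵥ y)
        ≤ (‖star x ⬝ᵥ y‖ * hnorm x) * (‖l‖ * hnorm y) :=
      mul_le_mul_of_nonneg_left hbound (by positivity)
    nlinarith [h3]
  have hc0 : 0 ≤ cosAngle x y := by unfold cosAngle; positivity
  unfold sinAngle
  apply Real.sqrt_le_sqrt
  have := pow_le_pow_left₀ hc0 hcos 2
  linarith
end

section
/- Let A be an n-by-n Hermitian matrix and X an n-by-k matrix with orthonormal columns spanning an invariant subspace of A (so AX = X(X*AX)). Let K = XW for a k-by-s matrix W of rank s, and let σ be a scalar. Then c satisfies K*(A − σI)²K c = ξ K*(A − σI)K c if and only if c satisfies W*(X*AX − σI)²W c = ξ W*(X*AX − σI)W c. Consequently, (θ, v) = (ξ + σ, Kc) is a harmonic Ritz pair of A with respect to range(K) and σ if and only if (θ, Wc) is a harmonic Ritz pair of the k-by-k Hermitian matrix X*AX with respect to range(W) and σ; in particular the harmonic Ritz values of A over range(K) coincide with those of X*AX over range(W). -/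
open Matrix
open scoped ComplexOrder

/-- reduction of the harmonic Rayleigh–Ritz procedure for A over
range(XW) to the one for X*AX over range(W), when range(X) is A-invariant. -/
theorem stmt15_harmonic_reduction_invariant
    {n k s : ℕ} (A : Matrix (Fin n) (Fin n) ℂ) (hA : A.IsHermitian)
    (X : Matrix (Fin n) (Fin k) ℂ) (hXon : Xᴴ * X = 1)
    (hXinv : A * X = X * (Xᴴ * A * X))
    (W : Matrix (Fin k) (Fin s) ℂ)
    (hW : LinearIndependent ℂ (fun j : Fin s => Wᵀ j))
    (K : Matrix (Fin n) (Fin s) ℂ) (hKXW : K = X * W)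
    (σ : ℝ) :
    (∀ (ξ : ℂ) (c : Fin s → ℂ),
        ((Kᴴ * (A - (σ : ℂ) • 1) ^ 2 * K) *ᵥ c =
            ξ • ((Kᴴ * (A - (σ : ℂ) • 1) * K) *ᵥ c) ↔
          (Wᴴ * (Xᴴ * A * X - (σ : ℂ) • 1) ^ 2 * W) *ᵥ c =
            ξ • ((Wᴴ * (Xᴴ * A * X - (σ : ℂ) • 1) * W) *ᵥ c))) ∧
      (∀ (θ : ℂ) (c : Fin s → ℂ),
        (HarmonicRitzPair A (σ : ℂ) (LinearMap.range K.mulVecLin) θ (K *ᵥ c) ↔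
          HarmonicRitzPair (Xᴴ * A * X) (σ : ℂ) (LinearMap.range W.mulVecLin) θ
            (W *ᵥ c))) ∧
      {θ : ℂ | ∃ v, HarmonicRitzPair A (σ : ℂ) (LinearMap.range K.mulVecLin) θ v} =
        {θ : ℂ | ∃ v, HarmonicRitzPair (Xᴴ * A * X) (σ : ℂ)
          (LinearMap.range W.mulVecLin) θ v} := by
  set B := Xᴴ * A * X with hB
  have h1 : (A - (σ : ℂ) • 1) * X = X * (B - (σ : ℂ) • 1) := by
    rw [Matrix.sub_mul, Matrix.mul_sub, hXinv, Matrix.smul_mul, Matrix.mul_smul,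
      Matrix.one_mul, Matrix.mul_one]
  have h2 : (A - (σ : ℂ) • 1) ^ 2 * X = X * (B - (σ : ℂ) • 1) ^ 2 := by
    rw [sq, sq, Matrix.mul_assoc, h1, ← Matrix.mul_assoc, h1, Matrix.mul_assoc]
  have key : ∀ (M : Matrix (Fin n) (Fin n) ℂ) (N : Matrix (Fin k) (Fin k) ℂ),
      M * X = X * N → (X * W)ᴴ * M * (X * W) = Wᴴ * N * W := by
    intro M N h
    have hmw : M * (X * W) = X * (N * W) := by
      rw [← Matrix.mul_assoc, h, Matrix.mul_assoc]
    rw [conjTranspose_mul, Matrix.mul_assoc (Wᴴ * Xᴴ) M (X * W), hmw,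
      Matrix.mul_assoc Wᴴ Xᴴ, ← Matrix.mul_assoc Xᴴ X (N * W), hXon, Matrix.one_mul,
      ← Matrix.mul_assoc]
  have hK1 : Kᴴ * (A - (σ : ℂ) • 1) * K = Wᴴ * (B - (σ : ℂ) • 1) * W := by
    rw [hKXW]; exact key _ _ h1
  have hK2 : Kᴴ * (A - (σ : ℂ) • 1) ^ 2 * K = Wᴴ * (B - (σ : ℂ) • 1) ^ 2 * W := by
    rw [hKXW]; exact key _ _ h2
  have hcancel : ∀ p q : Fin k → ℂ, star (X *ᵥ p) ⬝ᵥ (X *ᵥ q) = star p ⬝ᵥ q := by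
    intro p q
    rw [Matrix.star_mulVec, Matrix.dotProduct_mulVec, Matrix.vecMul_vecMul, hXon,
      Matrix.vecMul_one]
  have hXinj : ∀ u : Fin k → ℂ, X *ᵥ u = 0 → u = 0 := by
    intro u h
    have h2 := congrArg (fun z => Xᴴ *ᵥ z) h
    simpa [Matrix.mulVec_mulVec, hXon] using h2
  have hKc : ∀ c : Fin s → ℂ, K *ᵥ c = X *ᵥ (W *ᵥ c) := by
    intro c; rw [hKXW, ← Matrix.mulVec_mulVec]
  have hne : ∀ c : Fin s → ℂ, (K *ᵥ c ≠ 0 ↔ W *ᵥ c ≠ 0) := by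
    intro c
    constructor
    · intro h hw; exact h (by rw [hKc, hw, Matrix.mulVec_zero])
    · intro h hk; exact h (hXinj _ (by rw [← hKc]; exact hk))
  have hterm : ∀ (θ : ℂ) (c d : Fin s → ℂ),
      star ((A - (σ : ℂ) • 1) *ᵥ (K *ᵥ d)) ⬝ᵥ (A *ᵥ (K *ᵥ c) - θ • (K *ᵥ c))
        = star ((B - (σ : ℂ) • 1) *ᵥ (W *ᵥ d)) ⬝ᵥ (B *ᵥ (W *ᵥ c) - θ • (W *ᵥ c)) := by
    intro θ c d
    have m1 : (A - (σ : ℂ) • 1) * (X * W) = X * ((B - (σ : ℂ) • 1) * W) := by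
      rw [← Matrix.mul_assoc, h1, Matrix.mul_assoc]
    have m2 : A * (X * W) = X * (B * W) := by
      rw [← Matrix.mul_assoc, hXinv, Matrix.mul_assoc]
    have e1 : (A - (σ : ℂ) • 1) *ᵥ (K *ᵥ d) = X *ᵥ ((B - (σ : ℂ) • 1) *ᵥ (W *ᵥ d)) := by
      rw [hKXW]; simp only [Matrix.mulVec_mulVec]; rw [m1]
    have e2 : A *ᵥ (K *ᵥ c) = X *ᵥ (B *ᵥ (W *ᵥ c)) := by
      rw [hKXW]; simp only [Matrix.mulVec_mulVec]; rw [m2]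
    have e3 : θ • (K *ᵥ c) = X *ᵥ (θ • (W *ᵥ c)) := by
      rw [hKc, Matrix.mulVec_smul]
    rw [e1, e2, e3, ← Matrix.mulVec_sub, hcancel]
  have part2 : ∀ (θ : ℂ) (c : Fin s → ℂ),
      (HarmonicRitzPair A (σ : ℂ) (LinearMap.range K.mulVecLin) θ (K *ᵥ c) ↔
        HarmonicRitzPair B (σ : ℂ) (LinearMap.range W.mulVecLin) θ (W *ᵥ c)) := by
    intro θ c
    constructor
    · rintro ⟨-, hne0, hcond⟩
      refine ⟨⟨c, rfl⟩, (hne c).mp hne0, ?_⟩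
      rintro y ⟨d, rfl⟩
      have h := hcond (K *ᵥ d) ⟨d, rfl⟩
      rw [hterm θ c d] at h
      simpa [Matrix.mulVecLin_apply] using h
    · rintro ⟨-, hne0, hcond⟩
      refine ⟨⟨c, rfl⟩, (hne c).mpr hne0, ?_⟩
      rintro y ⟨d, rfl⟩
      have h := hcond (W *ᵥ d) ⟨d, rfl⟩
      have h' : star ((A - (σ : ℂ) • 1) *ᵥ (K *ᵥ d)) ⬝ᵥ
          (A *ᵥ (K *ᵥ c) - θ • (K *ᵥ c)) = 0 := by
        rw [hterm θ c d]; exact h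
      simpa [Matrix.mulVecLin_apply] using h'
  refine ⟨?_, part2, ?_⟩
  · intro ξ c
    rw [hK1, hK2]
  · ext θ
    simp only [Set.mem_setOf_eq]
    constructor
    · rintro ⟨v, hv⟩
      obtain ⟨c, rfl⟩ := hv.1
      exact ⟨W *ᵥ c, (part2 θ c).mp (by simpa [Matrix.mulVecLin_apply] using hv)⟩
    · rintro ⟨v, hv⟩
      obtain ⟨c, rfl⟩ := hv.1
      exact ⟨K *ᵥ c, (part2 θ c).mpr (by simpa [Matrix.mulVecLin_apply] using hv)⟩
end

section
/- Let A be an n-by-n Hermitian matrix, x a unit eigenvector with Ax = λx, A nonsingular, and y a unit vector with 0 < φ = ∠(x, y) ≤ π/2. Write φ_A = ∠(x, Ay). Then a_0² cos²φ + sin²φ ≤ sin²φ / sin²φ_A ≤ a_1² cos²φ + sin²φ, where a_0² = λ² / (max over eigenvalues λ_j of A other than λ of λ_j²) and a_1² = λ² / (min over eigenvalues λ_j of A other than λ of λ_j²), the maxima and minima taken over the eigenvalues of A restricted to the orthogonal complement of x (i.e., the multiset Λ(A) with one copy of λ removed). -/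
open Matrix
open scoped ComplexOrder

noncomputable def s17toE {n : ℕ} (a : Fin n → ℂ) : EuclideanSpace ℂ (Fin n) :=
  (WithLp.equiv 2 (Fin n → ℂ)).symm a

lemma s17inner {n : ℕ} (a b : Fin n → ℂ) : (inner ℂ (s17toE a) (s17toE b) : ℂ) = star a ⬝ᵥ b := by
  simp [s17toE, PiLp.inner_apply, dotProduct, mul_comm]

lemma s17hnorm {n : ℕ} (a : Fin n → ℂ) : hnorm a = ‖s17toE a‖ := by
  rw [hnorm, @norm_eq_sqrt_re_inner ℂ, s17inner]; rfl

theorem s17parseval {n : ℕ} (b : OrthonormalBasis (Fin n) ℂ (EuclideanSpace ℂ (Fin n)))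
    (u : EuclideanSpace ℂ (Fin n)) :
    ‖u‖ ^ 2 = ∑ j, ‖(inner ℂ (b j) u : ℂ)‖ ^ 2 := by
  have h := b.sum_inner_mul_inner u u
  have h2 : RCLike.re (∑ i, (inner ℂ u (b i) * inner ℂ (b i) u : ℂ))
      = RCLike.re (inner ℂ u u : ℂ) := by rw [h]
  rw [inner_self_eq_norm_sq, map_sum] at h2
  rw [← h2]
  refine Finset.sum_congr rfl fun j _ => ?_
  rw [← inner_conj_symm u (b j), mul_comm, Complex.mul_conj, ← Complex.normSq_eq_norm_sq]
  simp

lemma s17adj {n : ℕ} {A : Matrix (Fin n) (Fin n) ℂ} (hA : A.IsHermitian)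
    (u v : Fin n → ℂ) : star (A *ᵥ u) ⬝ᵥ v = star u ⬝ᵥ (A *ᵥ v) := by
  rw [star_mulVec, dotProduct_mulVec, hA.eq]

lemma s17coefA {n : ℕ} {A : Matrix (Fin n) (Fin n) ℂ} (hA : A.IsHermitian)
    (u : Fin n → ℂ) (j : Fin n) :
    (inner ℂ (hA.eigenvectorBasis j) (s17toE (A *ᵥ u)) : ℂ)
      = (hA.eigenvalues j : ℂ) * inner ℂ (hA.eigenvectorBasis j) (s17toE u) := by
  have h1 : (inner ℂ (hA.eigenvectorBasis j) (s17toE (A *ᵥ u)) : ℂ)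
      = star (⇑(hA.eigenvectorBasis j)) ⬝ᵥ (A *ᵥ u) := s17inner (⇑(hA.eigenvectorBasis j)) (A *ᵥ u)
  have h3 : (inner ℂ (hA.eigenvectorBasis j) (s17toE u) : ℂ)
      = star (⇑(hA.eigenvectorBasis j)) ⬝ᵥ u := s17inner (⇑(hA.eigenvectorBasis j)) u
  rw [h1, h3, ← s17adj hA, hA.mulVec_eigenvectorBasis]
  have : ((hA.eigenvalues j : ℝ) • ⇑(hA.eigenvectorBasis j))
      = ((hA.eigenvalues j : ℂ)) • ⇑(hA.eigenvectorBasis j) := by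
    funext i; simp [Complex.real_smul]
  rw [this, star_smul, smul_dotProduct]
  simp [smul_eq_mul]

lemma s17pyth {n : ℕ} (a bvec : Fin n → ℂ) (h : star a ⬝ᵥ bvec = 0) (z : ℂ) :
    hnorm (z • a + bvec) ^ 2 = ‖z‖ ^ 2 * hnorm a ^ 2 + hnorm bvec ^ 2 := by
  rw [s17hnorm, s17hnorm, s17hnorm]
  have he : s17toE (z • a + bvec) = z • s17toE a + s17toE bvec := rfl
  rw [he, @norm_add_sq ℂ]
  have h' : (inner ℂ (z • s17toE a) (s17toE bvec) : ℂ) = 0 := by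
    rw [inner_smul_left]
    have : (inner ℂ (s17toE a) (s17toE bvec) : ℂ) = 0 := (s17inner a bvec).trans h
    rw [this, mul_zero]
  rw [h', norm_smul]
  simp
  ring

theorem s17key {n : ℕ} (A : Matrix (Fin n) (Fin n) ℂ) (hA : A.IsHermitian)
    (l : ℝ) (x : Fin n → ℂ) (hAx : A *ᵥ x = (l : ℂ) • x) (hxn : hnorm x = 1)
    (i₀ : Fin n) (hi₀ : hA.eigenvalues i₀ = l)
    (hne : (Finset.univ.erase i₀).Nonempty)
    (w : Fin n → ℂ) (hw : star x ⬝ᵥ w = 0) :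
    (Finset.univ.erase i₀).inf' hne (fun j => hA.eigenvalues j ^ 2) * hnorm w ^ 2
      ≤ hnorm (A *ᵥ w) ^ 2 ∧
    hnorm (A *ᵥ w) ^ 2
      ≤ (Finset.univ.erase i₀).sup' hne (fun j => hA.eigenvalues j ^ 2) * hnorm w ^ 2 := by
  set lam := hA.eigenvalues with hlam
  set b := hA.eigenvectorBasis with hb
  set m := (Finset.univ.erase i₀).inf' hne (fun j => lam j ^ 2) with hm
  set M := (Finset.univ.erase i₀).sup' hne (fun j => lam j ^ 2) with hM
  set c : Fin n → ℂ := fun j => inner ℂ (b j) (s17toE w) with hc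
  set d : Fin n → ℂ := fun j => inner ℂ (b j) (s17toE x) with hd
  -- eigenvalue relation for x
  have heig : ∀ j, lam j = l ∨ d j = 0 := by
    intro j
    have h1 : (inner ℂ (b j) (s17toE (A *ᵥ x)) : ℂ) = (lam j : ℂ) * d j := s17coefA hA x j
    have h2 : s17toE (A *ᵥ x) = (l : ℂ) • s17toE x := by rw [hAx]; rfl
    rw [h2, inner_smul_right] at h1
    have h3 : ((lam j : ℂ) - (l : ℂ)) * d j = 0 := by rw [sub_mul, h1]; ring
    rcases mul_eq_zero.1 h3 with h4 | h4
    · left; have := sub_eq_zero.1 h4; exact_mod_cast this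
    · right; exact h4
  -- orthogonality
  have horth : ∑ j, (starRingEnd ℂ) (d j) * c j = 0 := by
    have h := b.sum_inner_mul_inner (s17toE x) (s17toE w)
    have h2 : (inner ℂ (s17toE x) (s17toE w) : ℂ) = 0 := by rw [s17inner, hw]
    rw [h2] at h
    rw [← h]
    refine Finset.sum_congr rfl fun j _ => ?_
    show (starRingEnd ℂ) (inner ℂ (b j) (s17toE x)) * inner ℂ (b j) (s17toE w)
      = inner ℂ (s17toE x) (b j) * inner ℂ (b j) (s17toE w)
    rw [inner_conj_symm]
  -- norms
  have hxsum : ∑ j, ‖d j‖ ^ 2 = 1 := by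
    have := s17parseval b (s17toE x)
    rw [← s17hnorm, hxn] at this
    simpa using this.symm
  have hwsum : hnorm w ^ 2 = ∑ j, ‖c j‖ ^ 2 := by
    rw [s17hnorm]; exact s17parseval b (s17toE w)
  have hAwsum : hnorm (A *ᵥ w) ^ 2 = ∑ j, lam j ^ 2 * ‖c j‖ ^ 2 := by
    rw [s17hnorm, s17parseval b (s17toE (A *ᵥ w))]
    refine Finset.sum_congr rfl fun j _ => ?_
    rw [s17coefA hA w j, norm_mul, mul_pow, Complex.norm_real, Real.norm_eq_abs, sq_abs]
  -- termwise bounds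
  have hterm : ∀ j, m * ‖c j‖ ^ 2 ≤ lam j ^ 2 * ‖c j‖ ^ 2 ∧
      lam j ^ 2 * ‖c j‖ ^ 2 ≤ M * ‖c j‖ ^ 2 := by
    have hbnd : ∀ j, j ≠ i₀ → m ≤ lam j ^ 2 ∧ lam j ^ 2 ≤ M := by
      intro j hj
      have hmem : j ∈ Finset.univ.erase i₀ := Finset.mem_erase.2 ⟨hj, Finset.mem_univ j⟩
      exact ⟨Finset.inf'_le _ hmem, Finset.le_sup' (fun j => lam j ^ 2) hmem⟩
    by_cases hcase : ∃ j', j' ≠ i₀ ∧ lam j' = l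
    · obtain ⟨j', hj', hj'l⟩ := hcase
      intro j
      by_cases hj : j = i₀
      · subst hj
        have h1 : lam j ^ 2 = lam j' ^ 2 := by rw [hi₀, hj'l]
        rw [h1]
        exact ⟨mul_le_mul_of_nonneg_right (hbnd j' hj').1 (by positivity),
               mul_le_mul_of_nonneg_right (hbnd j' hj').2 (by positivity)⟩
      · exact ⟨mul_le_mul_of_nonneg_right (hbnd j hj).1 (by positivity),
               mul_le_mul_of_nonneg_right (hbnd j hj).2 (by positivity)⟩
    · push_neg at hcase
      have hd0 : ∀ j, j ≠ i₀ → d j = 0 := by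
        intro j hj
        rcases heig j with h | h
        · exact absurd h (hcase j hj)
        · exact h
      have hci₀ : c i₀ = 0 := by
        have hsum : ∑ j, (starRingEnd ℂ) (d j) * c j = (starRingEnd ℂ) (d i₀) * c i₀ := by
          refine Finset.sum_eq_single i₀ (fun j _ hj => by rw [hd0 j hj]; simp) (by simp)
        rw [hsum] at horth
        have hdne : d i₀ ≠ 0 := by
          intro h0
          have : ∑ j, ‖d j‖ ^ 2 = 0 := by
            refine Finset.sum_eq_zero fun j _ => ?_
            by_cases hj : j = i₀
            · subst hj; rw [h0]; simp
            · rw [hd0 j hj]; simp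
          rw [this] at hxsum; norm_num at hxsum
        rcases mul_eq_zero.1 horth with h | h
        · exact absurd h (by simpa using hdne)
        · exact h
      intro j
      by_cases hj : j = i₀
      · subst hj; rw [hci₀]; simp
      · exact ⟨mul_le_mul_of_nonneg_right (hbnd j hj).1 (by positivity),
               mul_le_mul_of_nonneg_right (hbnd j hj).2 (by positivity)⟩
  constructor
  · rw [hwsum, hAwsum, Finset.mul_sum]
    exact Finset.sum_le_sum fun j _ => (hterm j).1
  · rw [hwsum, hAwsum, Finset.mul_sum]
    exact Finset.sum_le_sum fun j _ => (hterm j).2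

set_option maxHeartbeats 2000000 in
/-- two-sided bound a₀²cos²φ + sin²φ ≤ sin²φ/sin²φ_A ≤ a₁²cos²φ + sin²φ,
where a₀² = λ²/max_{λⱼ∈Λ(A)∖λ} λⱼ² and a₁² = λ²/min_{λⱼ∈Λ(A)∖λ} λⱼ². -/
theorem stmt17_sin_ratio_bounds
    {n : ℕ} (A : Matrix (Fin n) (Fin n) ℂ) (hA : A.IsHermitian) (hdet : IsUnit A.det)
    (l : ℝ) (x : Fin n → ℂ) (hAx : A *ᵥ x = (l : ℂ) • x) (hxn : hnorm x = 1)
    (i₀ : Fin n) (hi₀ : hA.eigenvalues i₀ = l)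
    (hne : (Finset.univ.erase i₀).Nonempty)
    (y : Fin n → ℂ) (hyn : hnorm y = 1) (hphi : cosAngle x y < 1) :
    (l ^ 2 / (Finset.univ.erase i₀).sup' hne (fun j => hA.eigenvalues j ^ 2)) *
          cosAngle x y ^ 2 + sinAngle x y ^ 2 ≤
        sinAngle x y ^ 2 / sinAngle x (A *ᵥ y) ^ 2 ∧
      sinAngle x y ^ 2 / sinAngle x (A *ᵥ y) ^ 2 ≤
        (l ^ 2 / (Finset.univ.erase i₀).inf' hne (fun j => hA.eigenvalues j ^ 2)) *
          cosAngle x y ^ 2 + sinAngle x y ^ 2 := by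
  classical
  set M := (Finset.univ.erase i₀).sup' hne (fun j => hA.eigenvalues j ^ 2) with hM
  set m := (Finset.univ.erase i₀).inf' hne (fun j => hA.eigenvalues j ^ 2) with hm
  have hxx : star x ⬝ᵥ x = 1 := by
    have h1 := inner_self_eq_norm_sq_to_K (𝕜 := ℂ) (s17toE x)
    rw [← s17hnorm, hxn] at h1
    rw [← s17inner, h1]; norm_num
  set α := star x ⬝ᵥ y with hα
  set Ka := ‖α‖ with hKa
  have hKdef : cosAngle x y = Ka := by
    rw [cosAngle, hxn, hyn, mul_one, div_one]
  set w := y - α • x with hwdef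
  have hxw : star x ⬝ᵥ w = 0 := by
    rw [hwdef, dotProduct_sub, dotProduct_smul, hxx, ← hα, smul_eq_mul, mul_one, sub_self]
  have hy_dec : y = α • x + w := by rw [hwdef]; module
  have hwn : hnorm w ^ 2 = 1 - Ka ^ 2 := by
    have hp := s17pyth x w hxw α
    rw [← hy_dec, hxn, hyn] at hp
    rw [← hKa] at hp
    nlinarith [hp]
  have hKlt : Ka < 1 := by rw [← hKdef]; exact hphi
  have hKnn : 0 ≤ Ka := norm_nonneg α
  have hs2pos : 0 < 1 - Ka ^ 2 := by nlinarith
  have hAw : star x ⬝ᵥ (A *ᵥ w) = 0 := by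
    rw [← s17adj hA, hAx, star_smul, smul_dotProduct, hxw, smul_zero]
  have hAy_dec : A *ᵥ y = (α * (l : ℂ)) • x + A *ᵥ w := by
    conv_lhs => rw [hy_dec]
    rw [mulVec_add, mulVec_smul, hAx, smul_smul]
  have hAyn : hnorm (A *ᵥ y) ^ 2 = l ^ 2 * Ka ^ 2 + hnorm (A *ᵥ w) ^ 2 := by
    rw [hAy_dec, s17pyth x (A *ᵥ w) hAw (α * (l : ℂ)), hxn]
    rw [norm_mul, Complex.norm_real, Real.norm_eq_abs, mul_pow, ← hKa, sq_abs]
    ring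
  obtain ⟨hlow, hupp⟩ := s17key A hA l x hAx hxn i₀ hi₀ hne w hxw
  rw [hwn] at hlow hupp
  have hdet0 : A.det ≠ 0 := hdet.ne_zero
  have heign0 : ∀ j, hA.eigenvalues j ≠ 0 := by
    intro j hj
    rw [hA.det_eq_prod_eigenvalues] at hdet0
    refine hdet0 (Finset.prod_eq_zero (Finset.mem_univ j) ?_)
    rw [hj]; norm_num
  have hmpos : 0 < m := by
    rw [hm, Finset.lt_inf'_iff]
    exact fun j _ => pow_two_pos_of_ne_zero (heign0 j)
  have hMpos : 0 < M := by
    obtain ⟨j, hj⟩ := hne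
    exact lt_of_lt_of_le (pow_two_pos_of_ne_zero (heign0 j))
      (Finset.le_sup' (fun j => hA.eigenvalues j ^ 2) hj)
  set P := hnorm (A *ᵥ w) ^ 2 with hP
  have hPpos : 0 < P := lt_of_lt_of_le (by positivity) hlow
  have hxAy : star x ⬝ᵥ (A *ᵥ y) = α * (l : ℂ) := by
    rw [hAy_dec, dotProduct_add, dotProduct_smul, hxx, hAw, smul_eq_mul, mul_one, add_zero]
  have hcA : cosAngle x (A *ᵥ y) = Ka * |l| / hnorm (A *ᵥ y) := by
    rw [cosAngle, hxAy, hxn, one_mul, norm_mul, Complex.norm_real, Real.norm_eq_abs, ← hKa]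
  have hN2 : hnorm (A *ᵥ y) ^ 2 = l ^ 2 * Ka ^ 2 + P := hAyn
  have hN2pos : 0 < hnorm (A *ᵥ y) ^ 2 := by rw [hN2]; positivity
  have hcA2 : cosAngle x (A *ᵥ y) ^ 2 = l ^ 2 * Ka ^ 2 / (l ^ 2 * Ka ^ 2 + P) := by
    rw [hcA, div_pow, mul_pow, sq_abs, hN2]; ring_nf
  have hsinA2 : sinAngle x (A *ᵥ y) ^ 2 = P / (l ^ 2 * Ka ^ 2 + P) := by
    rw [sinAngle, Real.sq_sqrt, hcA2]
    · field_simp; ring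
    · rw [hcA2]
      have h1 : l ^ 2 * Ka ^ 2 / (l ^ 2 * Ka ^ 2 + P) ≤ 1 := by
        rw [div_le_one (by positivity)]; linarith
      linarith
  have hsin2 : sinAngle x y ^ 2 = 1 - Ka ^ 2 := by
    rw [sinAngle, Real.sq_sqrt, hKdef]
    rw [hKdef]; nlinarith
  have hratio : sinAngle x y ^ 2 / sinAngle x (A *ᵥ y) ^ 2
      = (1 - Ka ^ 2) * (l ^ 2 * Ka ^ 2 + P) / P := by
    rw [hsin2, hsinA2, div_div_eq_mul_div]
  rw [hratio, hsin2, hKdef]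
  constructor
  · rw [div_mul_eq_mul_div, div_add' _ _ _ hMpos.ne', div_le_div_iff₀ hMpos hPpos]
    nlinarith [mul_le_mul_of_nonneg_left hupp (by positivity : (0:ℝ) ≤ l ^ 2 * Ka ^ 2)]
  · rw [div_mul_eq_mul_div, div_add' _ _ _ hmpos.ne', div_le_div_iff₀ hPpos hmpos]
    nlinarith [mul_le_mul_of_nonneg_left hlow (by positivity : (0:ℝ) ≤ l ^ 2 * Ka ^ 2)]
end

section
/- Let A be an n-by-n Hermitian matrix and σ ∉ Λ(A). If T = |A − σI|^{-1} (the inverse of the matrix absolute value of A − σI), then T is Hermitian positive definite, commutes with A, and the condition number κ(T^{1/2}(A − σI)) = |ν_max/ν_min| of T^{1/2}(A − σI) (ratio of its largest to smallest magnitude eigenvalues) equals κ(A − σI)^{1/2} = ((max_{λ_j ∈ Λ(A)} |λ_j − σ|) / (min_{λ_j ∈ Λ(A)} |λ_j − σ|))^{1/2}. -/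
open Matrix
open scoped ComplexOrder

private lemma hU_collapse {n : ℕ} {U : Matrix (Fin n) (Fin n) ℂ} (h : U * star U = 1) :
    ∀ M : Matrix (Fin n) (Fin n) ℂ, U * (star U * M) = M := fun M => by
  rw [← Matrix.mul_assoc, h, Matrix.one_mul]

private lemma hU_collapse' {n : ℕ} {U : Matrix (Fin n) (Fin n) ℂ} (h : star U * U = 1) :
    ∀ M : Matrix (Fin n) (Fin n) ℂ, star U * (U * M) = M := fun M => by
  rw [← Matrix.mul_assoc, h, Matrix.one_mul]

/-- If `C` is positive definite and `X` commutes with `C * C`, then `X` commutes with `C`. -/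
private lemma comm_of_comm_sq {n : ℕ} {C X : Matrix (Fin n) (Fin n) ℂ}
    (hC : C.PosDef) (h : X * (C * C) = (C * C) * X) : X * C = C * X := by
  classical
  have hH : C.IsHermitian := hC.1
  set U : Matrix (Fin n) (Fin n) ℂ := (hH.eigenvectorUnitary : Matrix (Fin n) (Fin n) ℂ) with hUdef
  set d : Fin n → ℂ := RCLike.ofReal ∘ hH.eigenvalues with hddef
  have hspec : C = U * Matrix.diagonal d * star U := hH.spectral_theorem
  have hU1 : U * star U = 1 := Matrix.mem_unitaryGroup_iff.mp (hH.eigenvectorUnitary).2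
  have hU2 : star U * U = 1 := Matrix.mem_unitaryGroup_iff'.mp (hH.eigenvectorUnitary).2
  have hU1' := hU_collapse hU1
  have hU2' := hU_collapse' hU2
  have hB : star U * X * U * (Matrix.diagonal d * Matrix.diagonal d)
      = Matrix.diagonal d * Matrix.diagonal d * (star U * X * U) := by
    have h' := congrArg (fun M => star U * M * U) h
    rw [hspec] at h'
    simp only [Matrix.mul_assoc, hU1', hU2', hU2, hU1, Matrix.mul_one] at h' ⊢
    exact h'
  rw [Matrix.diagonal_mul_diagonal] at hB
  rw [← Matrix.ext_iff] at hB
  simp only [Matrix.mul_diagonal, Matrix.diagonal_mul] at hB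
  have hBd : (star U * X * U) * Matrix.diagonal d = Matrix.diagonal d * (star U * X * U) := by
    ext i j
    rw [Matrix.mul_diagonal, Matrix.diagonal_mul]
    have hsum_ne : d i + d j ≠ 0 := by
      have hpos : (0:ℝ) < hH.eigenvalues i + hH.eigenvalues j := by
        have := hC.eigenvalues_pos i; have := hC.eigenvalues_pos j; linarith
      have : d i + d j = ((hH.eigenvalues i + hH.eigenvalues j : ℝ) : ℂ) := by
        simp [hddef, Function.comp]
      rw [this]
      exact_mod_cast hpos.ne'
    have key : (d i - d j) * (star U * X * U) i j = 0 := by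
      have h2 : (d i + d j) * ((d i - d j) * (star U * X * U) i j) = 0 := by
        linear_combination (-1 : ℂ) * hB i j
      exact (mul_eq_zero.mp h2).resolve_left hsum_ne
    linear_combination (-1 : ℂ) * key
  have hfin := congrArg (fun M => U * M * star U) hBd
  simp only [Matrix.mul_assoc, hU1', hU2', hU1, hU2, Matrix.mul_one] at hfin
  rw [hspec]
  simp only [Matrix.mul_assoc]
  exact hfin

/-- A Hermitian complex matrix of positive size has nonempty spectrum. -/
private lemma herm_spec_nonempty {n : ℕ} (hn : 0 < n) {X : Matrix (Fin n) (Fin n) ℂ}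
    (hX : X.IsHermitian) : (spectrum ℂ X).Nonempty := by
  classical
  refine ⟨((hX.eigenvalues ⟨0, hn⟩ : ℝ) : ℂ), ?_⟩
  have h := hX.eigenvalues_mem_spectrum_real (i := ⟨0, hn⟩)
  have := spectrum.algebraMap_mem ℂ h
  simpa using this

private lemma absSet_of_sq_image {s t : Set ℂ} (h : t = (· ^ 2) '' s) :
    {r : ℝ | ∃ μ ∈ s, r = ‖μ‖}
      = Real.sqrt '' {r : ℝ | ∃ μ ∈ t, r = ‖μ‖} := by
  subst h; ext r
  constructor
  · rintro ⟨μ, hμ, rfl⟩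
    refine ⟨‖μ ^ 2‖, ⟨μ ^ 2, ⟨μ, hμ, rfl⟩, rfl⟩, ?_⟩
    rw [norm_pow, Real.sqrt_sq (norm_nonneg μ)]
  · rintro ⟨x, ⟨ν, ⟨μ, hμ, rfl⟩, rfl⟩, rfl⟩
    exact ⟨μ, hμ, by rw [norm_pow, Real.sqrt_sq (norm_nonneg μ)]⟩

private lemma absSet_subset_of_sq_image_subset {s t : Set ℂ}
    (h : (· ^ 2) '' s ⊆ (· ^ 2) '' t) :
    {r : ℝ | ∃ μ ∈ s, r = ‖μ‖} ⊆ {r : ℝ | ∃ μ ∈ t, r = ‖μ‖} := by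
  rintro r ⟨μ, hμ, rfl⟩
  obtain ⟨ν, hν, hsq⟩ : μ ^ 2 ∈ (· ^ 2) '' t := h ⟨μ, hμ, rfl⟩
  refine ⟨ν, hν, ?_⟩
  have hsq' : ν ^ 2 = μ ^ 2 := hsq
  have habs : ‖ν‖ ^ 2 = ‖μ‖ ^ 2 := by
    rw [← norm_pow, ← norm_pow, hsq']
  have := congrArg Real.sqrt habs
  rwa [Real.sqrt_sq (norm_nonneg ν), Real.sqrt_sq (norm_nonneg μ), eq_comm] at this



/-- the absolute value preconditioner T = |A − σI|⁻¹ is HPD, commutes with A,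
and κ(T^{1/2}(A − σI)) = κ(A − σI)^{1/2}. -/
theorem stmt19_absolute_value_preconditioner
    {n : ℕ} (A : Matrix (Fin n) (Fin n) ℂ) (hA : A.IsHermitian)
    (σ : ℝ) (hσ : (σ : ℂ) ∉ spectrum ℂ A)
    (S : Matrix (Fin n) (Fin n) ℂ) (hS : S = A - (σ : ℂ) • 1)
    (absS : Matrix (Fin n) (Fin n) ℂ) (habsPD : absS.PosDef)
    (habs : absS * absS = S * S)
    (T : Matrix (Fin n) (Fin n) ℂ) (hT : T = absS⁻¹)
    (Tsqrt : Matrix (Fin n) (Fin n) ℂ) (hTs : Tsqrt.PosDef)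
    (hTsq : Tsqrt * Tsqrt = T) :
    T.PosDef ∧ T * A = A * T ∧
      specCond (Tsqrt * S) = Real.sqrt (specCond S) := by
  classical
  -- basic commutation facts
  have hAS : A * S = S * A := by
    rw [hS]
    simp [Matrix.mul_sub, Matrix.sub_mul, Matrix.mul_smul, Matrix.smul_mul]
  have hAabs : A * absS = absS * A := by
    refine comm_of_comm_sq habsPD ?_
    rw [habs, ← Matrix.mul_assoc, hAS, Matrix.mul_assoc, hAS, Matrix.mul_assoc]
  have hSabs : S * absS = absS * S := by
    refine comm_of_comm_sq habsPD ?_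
    rw [habs, Matrix.mul_assoc]
  have habsUnit : IsUnit absS.det := habsPD.det_pos.ne'.isUnit
  have hinv1 : absS⁻¹ * absS = 1 := Matrix.nonsing_inv_mul absS habsUnit
  have hinv2 : absS * absS⁻¹ = 1 := Matrix.mul_nonsing_inv absS habsUnit
  have hcomminv : ∀ X : Matrix (Fin n) (Fin n) ℂ, X * absS = absS * X → X * T = T * X := by
    intro X hX
    rw [hT]
    calc X * absS⁻¹ = absS⁻¹ * absS * (X * absS⁻¹) := by rw [hinv1, Matrix.one_mul]
      _ = absS⁻¹ * (absS * X) * absS⁻¹ := by simp only [Matrix.mul_assoc]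
      _ = absS⁻¹ * (X * absS) * absS⁻¹ := by rw [hX]
      _ = absS⁻¹ * X * (absS * absS⁻¹) := by simp only [Matrix.mul_assoc]
      _ = absS⁻¹ * X := by rw [hinv2, Matrix.mul_one]
  have hAT : A * T = T * A := hcomminv A hAabs
  have hST : S * T = T * S := hcomminv S hSabs
  have hT_PD : T.PosDef := hT ▸ habsPD.inv
  have hSTs : S * Tsqrt = Tsqrt * S := by
    refine comm_of_comm_sq hTs ?_
    rw [hTsq]; exact hST
  refine ⟨hT_PD, hAT.symm, ?_⟩
  -- the condition number statement
  have hM2 : (Tsqrt * S) * (Tsqrt * S) = absS := by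
    calc (Tsqrt * S) * (Tsqrt * S) = Tsqrt * (S * Tsqrt) * S := by
          simp only [Matrix.mul_assoc]
      _ = Tsqrt * (Tsqrt * S) * S := by rw [hSTs]
      _ = (Tsqrt * Tsqrt) * (S * S) := by simp only [Matrix.mul_assoc]
      _ = absS⁻¹ * (absS * absS) := by rw [hTsq, hT, habs]
      _ = absS⁻¹ * absS * absS := by rw [Matrix.mul_assoc]
      _ = absS := by rw [hinv1, Matrix.one_mul]
  rcases Nat.eq_zero_or_pos n with hn0 | hn
  · subst hn0
    haveI : Subsingleton (Matrix (Fin 0) (Fin 0) ℂ) := ⟨fun a b => by ext i j; exact i.elim0⟩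
    have hempty : ∀ X : Matrix (Fin 0) (Fin 0) ℂ, spectrum ℂ X = ∅ := fun X => by
      ext μ
      simp [spectrum.mem_iff, isUnit_of_subsingleton]
    simp [specCond, hempty, Real.sSup_empty, Real.sInf_empty]
  · have hS' : S.IsHermitian := by
      rw [hS]
      refine hA.sub ?_
      simp [Matrix.IsHermitian, Matrix.conjTranspose_smul, Complex.star_def,
        Complex.conj_ofReal]
    -- spectra and squaring
    have h1 : spectrum ℂ absS = (· ^ 2) '' spectrum ℂ (Tsqrt * S) := by
      have hsq : (Tsqrt * S) ^ 2 = absS := by rw [pow_two]; exact hM2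
      rw [← hsq]
      exact spectrum.map_pow_of_pos (Tsqrt * S) (by norm_num)
    have h2eq : absS ^ 2 = S ^ 2 := by rw [pow_two, pow_two, habs]
    have h2 : (· ^ 2) '' spectrum ℂ absS = (· ^ 2) '' spectrum ℂ S := by
      rw [← spectrum.map_pow_of_pos absS (by norm_num : 0 < 2),
        ← spectrum.map_pow_of_pos S (by norm_num : 0 < 2), h2eq]
    have hsetA := absSet_of_sq_image h1
    have hsetB : {r : ℝ | ∃ μ ∈ spectrum ℂ absS, r = ‖μ‖}
        = {r : ℝ | ∃ μ ∈ spectrum ℂ S, r = ‖μ‖} :=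
      Set.Subset.antisymm (absSet_subset_of_sq_image_subset h2.le)
        (absSet_subset_of_sq_image_subset h2.ge)
    rw [hsetB] at hsetA
    set Rs : Set ℝ := {r : ℝ | ∃ μ ∈ spectrum ℂ S, r = ‖μ‖} with hRs
    -- properties of Rs
    have hRsimg : Rs = (fun μ : ℂ => ‖μ‖) '' spectrum ℂ S := by
      ext r; simp [hRs, Set.mem_image, eq_comm]
    have hRsfin : Rs.Finite := hRsimg ▸ (Matrix.finite_spectrum S).image _
    obtain ⟨μ₀, hμ₀⟩ := herm_spec_nonempty hn hS'
    have hRsne : Rs.Nonempty := ⟨‖μ₀‖, μ₀, hμ₀, rfl⟩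
    have hRsnonneg : ∀ r ∈ Rs, (0:ℝ) ≤ r := by rintro r ⟨μ, _, rfl⟩; exact norm_nonneg μ
    have hbddA : BddAbove Rs := hRsfin.bddAbove
    have hbddB : BddBelow Rs := hRsfin.bddBelow
    have hsupnonneg : (0:ℝ) ≤ sSup Rs :=
      le_trans (hRsnonneg _ hRsne.choose_spec) (le_csSup hbddA hRsne.choose_spec)
    have hmono : Monotone Real.sqrt := fun a b h => Real.sqrt_le_sqrt h
    unfold specCond
    rw [hsetA,
      ← hmono.map_csSup_of_continuousAt Real.continuous_sqrt.continuousAt hRsne hbddA,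
      ← hmono.map_csInf_of_continuousAt Real.continuous_sqrt.continuousAt hRsne hbddB,
      ← Real.sqrt_div hsupnonneg]
end
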